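/- For any two bipartite quantum states ρ on ℂ^{d_A}⊗ℂ^{d_B} and σ on ℂ^{d_{A'}}⊗ℂ^{d_{B'}} with E_N(σ) > 0, the asymptotic exact conversion rate under PPTq operations is R_PPTq(ρ→σ) = E_N(ρ)/E_N(σ), where E_N is the logarithmic negativity. -/

import Mathlib

open scoped BigOperators ComplexOrder

noncomputable section

/-- Bipartite matrices on `ℂ^{IA} ⊗ ℂ^{IB}`, indexed by pairs. -/
abbrev BMat (IA IB : Type) : Type := Matrix (IA × IB) (IA × IB) ℂ

/-- Partial transpose on the `B` system: `(X^{T_B})_{(i,j),(k,l)} = X_{(i,l),(k,j)}`. -/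
def ptB {IA IB : Type} (X : BMat IA IB) : BMat IA IB :=
  fun p q => X (p.1, q.2) (q.1, p.2)

/-- Trace norm `‖X‖₁ = tr √(X† X)`. -/
noncomputable def traceNorm {n : Type} [Fintype n] [DecidableEq n]
    (X : Matrix n n ℂ) : ℝ :=
  (((Matrix.posSemidef_conjTranspose_mul_self X).1.eigenvectorUnitary.1 *
      Matrix.diagonal (fun i => ((Real.sqrt ((Matrix.posSemidef_conjTranspose_mul_self X).1.eigenvalues i) : ℝ) : ℂ)) *
      (star (Matrix.posSemidef_conjTranspose_mul_self X).1.eigenvectorUnitary : Matrix n n ℂ)).trace).re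

/-- Operator norm (largest singular value). -/
noncomputable def opNorm {n : Type} [Fintype n] [DecidableEq n] (X : Matrix n n ℂ) : ℝ :=
  ‖Matrix.toEuclideanCLM (𝕜 := ℂ) X‖

/-- Logarithmic negativity `E_N(X) = log₂ ‖X^{T_B}‖₁`. -/
noncomputable def EN {IA IB : Type} [Fintype IA] [Fintype IB] [DecidableEq IA] [DecidableEq IB]
    (X : BMat IA IB) : ℝ :=
  Real.logb 2 (traceNorm (ptB X))

/-- The extension `id_k ⊗ f` of a map on matrices, acting blockwise. -/
def extMap {I J : Type} (f : Matrix I I ℂ → Matrix J J ℂ) (k : ℕ)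
    (M : Matrix (Fin k × I) (Fin k × I) ℂ) : Matrix (Fin k × J) (Fin k × J) ℂ :=
  fun p q => f (fun i i' => M (p.1, i) (q.1, i')) p.2 q.2

/-- A map on matrices is completely positive if all its extensions `id_k ⊗ f`
map positive semidefinite matrices to positive semidefinite matrices. -/
def CompletelyPositive {I J : Type} [Fintype I] [Fintype J]
    (f : Matrix I I ℂ → Matrix J J ℂ) : Prop :=
  ∀ (k : ℕ) (M : Matrix (Fin k × I) (Fin k × I) ℂ), M.PosSemidef → (extMap f k M).PosSemidef

/-- A PPTq operation: a Hermitian-preserving, trace-preserving linear map `N`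
such that `T_{B'} ∘ N ∘ T_B` is completely positive. -/
def IsPPTq {IA IB JA JB : Type} [Fintype IA] [Fintype IB] [Fintype JA] [Fintype JB]
    (N : BMat IA IB →ₗ[ℂ] BMat JA JB) : Prop :=
  (∀ X : BMat IA IB, X.IsHermitian → (N X).IsHermitian) ∧
  (∀ X : BMat IA IB, (N X).trace = X.trace) ∧
  CompletelyPositive (fun X => ptB (N (ptB X)))

/-- A bipartite quasi-state: Hermitian with trace one. -/
def IsQuasiState {IA IB : Type} [Fintype IA] [Fintype IB] (ρ : BMat IA IB) : Prop :=
  ρ.IsHermitian ∧ ρ.trace = 1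

/-- A bipartite quantum state: positive semidefinite with trace one. -/
def IsState {IA IB : Type} [Fintype IA] [Fintype IB] (ρ : BMat IA IB) : Prop :=
  ρ.PosSemidef ∧ ρ.trace = 1

/-- The maximally entangled state `Φ^d = (1/d) ∑_{i,j} |ii⟩⟨jj|`. -/
noncomputable def MES (d : ℕ) : BMat (Fin d) (Fin d) :=
  fun p q => if p.1 = p.2 ∧ q.1 = q.2 then (1 : ℂ) / d else 0

/-- `n`-fold tensor (Kronecker) power, with all `A` factors grouped against all `B` factors. -/
def tensorPow {IA IB : Type} (ρ : BMat IA IB) (n : ℕ) :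
    BMat (Fin n → IA) (Fin n → IB) :=
  fun p q => ∏ i : Fin n, ρ (p.1 i, p.2 i) (q.1 i, q.2 i)

/-- Tensor (Kronecker) product of two bipartite matrices, grouping `A` systems together
and `B` systems together. -/
def tensorMul {IA IB JA JB : Type} (ρ : BMat IA IB) (σ : BMat JA JB) :
    BMat (IA × JA) (IB × JB) :=
  fun p q => ρ (p.1.1, p.2.1) (q.1.1, q.2.1) * σ (p.1.2, p.2.2) (q.1.2, q.2.2)

/-- One-shot exact distillable entanglement under PPTq operations. -/
noncomputable def oneShotDistill {IA IB : Type} [Fintype IA] [Fintype IB]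
    (ρ : BMat IA IB) : ℝ :=
  sSup { x : ℝ | ∃ d : ℕ, 0 < d ∧ x = Real.logb 2 d ∧
    ∃ Λ : BMat IA IB →ₗ[ℂ] BMat (Fin d) (Fin d), IsPPTq Λ ∧ Λ ρ = MES d }

/-- One-shot exact entanglement cost under PPTq operations. -/
noncomputable def oneShotCost {IA IB : Type} [Fintype IA] [Fintype IB]
    (ρ : BMat IA IB) : ℝ :=
  sInf { x : ℝ | ∃ d : ℕ, 0 < d ∧ x = Real.logb 2 d ∧
    ∃ Λ : BMat (Fin d) (Fin d) →ₗ[ℂ] BMat IA IB, IsPPTq Λ ∧ Λ (MES d) = ρ }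

/-- The one-shot distillation error for `n` copies towards `Φ^d`, optimized over PPTq operations. -/
noncomputable def distillErr {IA IB : Type} [Fintype IA] [Fintype IB]
    [DecidableEq IA] [DecidableEq IB] (ρ : BMat IA IB) (n d : ℕ) : ℝ :=
  sInf { e : ℝ | ∃ Λ : BMat (Fin n → IA) (Fin n → IB) →ₗ[ℂ] BMat (Fin d) (Fin d),
    IsPPTq Λ ∧ e = traceNorm (Λ (tensorPow ρ n) - MES d) }

/-- The one-shot dilution error for preparing `n` copies from `Φ^d`, optimized over PPTq operations. -/
noncomputable def costErr {IA IB : Type} [Fintype IA] [Fintype IB]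
    [DecidableEq IA] [DecidableEq IB] (ρ : BMat IA IB) (n d : ℕ) : ℝ :=
  sInf { e : ℝ | ∃ Λ : BMat (Fin d) (Fin d) →ₗ[ℂ] BMat (Fin n → IA) (Fin n → IB),
    IsPPTq Λ ∧ e = traceNorm (tensorPow ρ n - Λ (MES d)) }

/-- Distillable entanglement under PPTq operations (asymptotically vanishing error). -/
noncomputable def EDppt {IA IB : Type} [Fintype IA] [Fintype IB]
    [DecidableEq IA] [DecidableEq IB] (ρ : BMat IA IB) : ℝ :=
  sSup { r : ℝ | Filter.Tendsto (fun n : ℕ => distillErr ρ n (2 ^ ⌊r * n⌋₊))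
    Filter.atTop (nhds 0) }

/-- Entanglement cost under PPTq operations (asymptotically vanishing error). -/
noncomputable def ECppt {IA IB : Type} [Fintype IA] [Fintype IB]
    [DecidableEq IA] [DecidableEq IB] (ρ : BMat IA IB) : ℝ :=
  sInf { r : ℝ | Filter.Tendsto (fun n : ℕ => costErr ρ n (2 ^ ⌈r * n⌉₊))
    Filter.atTop (nhds 0) }

/-- Tempered negativity `N_τ(σ | ρ)`. -/
noncomputable def temperedNeg {IA IB : Type} [Fintype IA] [Fintype IB]
    [DecidableEq IA] [DecidableEq IB] (σ ρ : BMat IA IB) : ℝ :=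
  sSup { t : ℝ | ∃ X : Matrix (IA × IB) (IA × IB) ℂ, X.IsHermitian ∧
    opNorm (ptB X) ≤ 1 ∧ (X * ρ).trace = (opNorm X : ℂ) ∧ (X * σ).trace = (t : ℂ) }

/-- Asymptotic exact conversion rate under PPTq operations. -/
noncomputable def convRate {IA IB JA JB : Type} [Fintype IA] [Fintype IB]
    [Fintype JA] [Fintype JB]
    (ρ : BMat IA IB) (σ : BMat JA JB) : ℝ :=
  sSup { r : ℝ | 0 ≤ r ∧ ∀ᶠ n : ℕ in Filter.atTop,
    ∃ Λ : BMat (Fin n → IA) (Fin n → IB) →ₗ[ℂ]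
          BMat (Fin ⌊r * n⌋₊ → JA) (Fin ⌊r * n⌋₊ → JB),
      IsPPTq Λ ∧ Λ (tensorPow ρ n) = tensorPow σ ⌊r * n⌋₊ }


/-! ### Auxiliary machinery -/

namespace PPTAux

open Matrix

/-! #### partial transpose basics -/

section ptB
variable {IA IB : Type}

lemma ptB_ptB (X : BMat IA IB) : ptB (ptB X) = X := rfl

lemma ptB_conjTranspose (X : BMat IA IB) : (ptB X)ᴴ = ptB (Xᴴ) := rfl

lemma ptB_isHermitian {X : BMat IA IB} (hX : X.IsHermitian) : (ptB X).IsHermitian := by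
  rw [Matrix.IsHermitian, ptB_conjTranspose, hX.eq]

lemma ptB_trace [Fintype IA] [Fintype IB] (X : BMat IA IB) : (ptB X).trace = X.trace := rfl

lemma ptB_tensorPow (X : BMat IA IB) (n : ℕ) : ptB (tensorPow X n) = tensorPow (ptB X) n := rfl

/-- `ptB` as a linear map. -/
def ptBL : BMat IA IB →ₗ[ℂ] BMat IA IB where
  toFun := ptB
  map_add' _ _ := rfl
  map_smul' _ _ := rfl

@[simp] lemma ptBL_apply (X : BMat IA IB) : ptBL X = ptB X := rfl

end ptB

/-! #### trace norm via eigenvalues -/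

section traceNorm
variable {n : Type} [Fintype n] [DecidableEq n]

lemma unit_mul_star (H : Matrix n n ℂ) (hH : H.IsHermitian) :
    (hH.eigenvectorUnitary : Matrix n n ℂ) * star (hH.eigenvectorUnitary : Matrix n n ℂ) = 1 :=
  (Matrix.mem_unitaryGroup_iff).mp hH.eigenvectorUnitary.2

lemma unit_star_mul (H : Matrix n n ℂ) (hH : H.IsHermitian) :
    star (hH.eigenvectorUnitary : Matrix n n ℂ) * (hH.eigenvectorUnitary : Matrix n n ℂ) = 1 :=
  (Matrix.mem_unitaryGroup_iff').mp hH.eigenvectorUnitary.2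

lemma trace_conj_unitary (H X : Matrix n n ℂ) (hH : H.IsHermitian) :
    (star (hH.eigenvectorUnitary : Matrix n n ℂ) * X * (hH.eigenvectorUnitary : Matrix n n ℂ)).trace = X.trace := by
  rw [Matrix.trace_mul_cycle, unit_mul_star H hH, Matrix.one_mul]

lemma spectral_eq (H : Matrix n n ℂ) (hH : H.IsHermitian) :
    H = (hH.eigenvectorUnitary : Matrix n n ℂ) * Matrix.diagonal (RCLike.ofReal ∘ hH.eigenvalues) *
      star (hH.eigenvectorUnitary : Matrix n n ℂ) := by
  conv_lhs => rw [hH.spectral_theorem]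
  rw [Unitary.conjStarAlgAut_apply]

lemma star_mul_self_mul_eq_diag (H : Matrix n n ℂ) (hH : H.IsHermitian) :
    star (hH.eigenvectorUnitary : Matrix n n ℂ) * H * (hH.eigenvectorUnitary : Matrix n n ℂ) =
      Matrix.diagonal (RCLike.ofReal ∘ hH.eigenvalues) := by
  have := hH.conjStarAlgAut_star_eigenvectorUnitary
  rwa [Unitary.conjStarAlgAut_apply, Unitary.coe_star, star_star] at this

open scoped MatrixOrder in
lemma psd_sqrt_unique {A S T : Matrix n n ℂ} (hS : S.PosSemidef) (hT : T.PosSemidef)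
    (h1 : S * S = A) (h2 : T * T = A) : S = T :=
  (CFC.sqrt_unique h1 hS.nonneg).symm.trans (CFC.sqrt_unique h2 hT.nonneg)

open scoped MatrixOrder in
/-- A square root of a positive semidefinite matrix. -/
def psdRoot {M : Matrix n n ℂ} (_ : M.PosSemidef) : Matrix n n ℂ := CFC.sqrt M

open scoped MatrixOrder in
lemma psdRoot_isHermitian {M : Matrix n n ℂ} (hM : M.PosSemidef) : (psdRoot hM)ᴴ = psdRoot hM :=
  (CFC.sqrt_nonneg M).posSemidef.1.eq

open scoped MatrixOrder in
lemma psdRoot_mul_self {M : Matrix n n ℂ} (hM : M.PosSemidef) : psdRoot hM * psdRoot hM = M :=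
  CFC.sqrt_mul_sqrt_self M hM.nonneg

/-- The matrix whose trace is the trace norm. -/
def tnSqrt (X : Matrix n n ℂ) : Matrix n n ℂ :=
  (Matrix.posSemidef_conjTranspose_mul_self X).1.eigenvectorUnitary.1 *
      Matrix.diagonal (fun i => ((Real.sqrt ((Matrix.posSemidef_conjTranspose_mul_self X).1.eigenvalues i) : ℝ) : ℂ)) *
      (star (Matrix.posSemidef_conjTranspose_mul_self X).1.eigenvectorUnitary : Matrix n n ℂ)

lemma traceNorm_eq (X : Matrix n n ℂ) : traceNorm X = (tnSqrt X).trace.re := rfl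

lemma tnSqrt_psd (X : Matrix n n ℂ) : (tnSqrt X).PosSemidef := by
  have hdiag : Matrix.PosSemidef (Matrix.diagonal (fun i => ((Real.sqrt
      ((Matrix.posSemidef_conjTranspose_mul_self X).1.eigenvalues i) : ℝ) : ℂ))) := by
    apply Matrix.PosSemidef.diagonal
    intro i
    simp only [Pi.zero_apply]
    rw [Complex.zero_le_real]
    exact Real.sqrt_nonneg _
  simpa [tnSqrt, Matrix.star_eq_conjTranspose] using
    hdiag.mul_mul_conjTranspose_same
      ((Matrix.posSemidef_conjTranspose_mul_self X).1.eigenvectorUnitary : Matrix n n ℂ)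

lemma tnSqrt_mul (X : Matrix n n ℂ) : tnSqrt X * tnSqrt X = Xᴴ * X := by
  have hA := Matrix.posSemidef_conjTranspose_mul_self X
  rw [tnSqrt]
  conv_rhs => rw [spectral_eq _ hA.1]
  simp only [Matrix.mul_assoc]
  rw [← Matrix.mul_assoc (star _) ((hA.1.eigenvectorUnitary : Matrix n n ℂ)), unit_star_mul _ hA.1,
    Matrix.one_mul, ← Matrix.mul_assoc (Matrix.diagonal _), Matrix.diagonal_mul_diagonal]
  congr 2
  ext i j
  simp only [Matrix.diagonal_apply, Function.comp_apply]
  split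
  · rw [← Complex.ofReal_mul, Real.mul_self_sqrt (hA.eigenvalues_nonneg _)]; rfl
  · rfl

lemma traceNorm_hermitian (H : Matrix n n ℂ) (hH : H.IsHermitian) :
    traceNorm H = ∑ i, |hH.eigenvalues i| := by
  set U : Matrix n n ℂ := (hH.eigenvectorUnitary : Matrix n n ℂ) with hU
  set S : Matrix n n ℂ := U * Matrix.diagonal (fun i => ((|hH.eigenvalues i| : ℝ) : ℂ)) * star U with hS
  have hSpsd : S.PosSemidef := by
    have hd : Matrix.PosSemidef (Matrix.diagonal (fun i => ((|hH.eigenvalues i| : ℝ) : ℂ))) := by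
      apply Matrix.PosSemidef.diagonal
      intro i
      simp only [Pi.zero_apply]
      rw [Complex.zero_le_real]
      exact abs_nonneg _
    simpa [hS, Matrix.star_eq_conjTranspose] using hd.mul_mul_conjTranspose_same U
  have hsq : S ^ 2 = Hᴴ * H := by
    rw [pow_two, hS]
    have : Hᴴ * H = U * Matrix.diagonal (fun i => ((hH.eigenvalues i : ℂ) * (hH.eigenvalues i : ℂ))) * star U := by
      conv_lhs => rw [hH.eq, spectral_eq H hH]
      rw [hU]
      simp only [Matrix.mul_assoc]
      rw [← Matrix.mul_assoc (star U) U, unit_star_mul H hH, Matrix.one_mul]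
      rw [← Matrix.mul_assoc (Matrix.diagonal _) (Matrix.diagonal _) (star U),
        Matrix.diagonal_mul_diagonal]
      rfl
    rw [this]
    simp only [Matrix.mul_assoc]
    rw [← Matrix.mul_assoc (star U) U, unit_star_mul H hH, Matrix.one_mul]
    rw [← Matrix.mul_assoc (Matrix.diagonal _) (Matrix.diagonal _) (star U),
      Matrix.diagonal_mul_diagonal]
    congr 2
    ext i j
    simp only [Matrix.diagonal_apply]
    split
    · simp [← Complex.ofReal_mul, ← abs_mul, abs_mul_self]
    · rfl
  have := psd_sqrt_unique hSpsd (tnSqrt_psd H) (by rw [← pow_two, hsq]) (tnSqrt_mul H)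
  rw [traceNorm_eq, ← this, hS]
  rw [Matrix.trace_mul_cycle, unit_star_mul H hH, Matrix.one_mul, Matrix.trace_diagonal]
  simp

lemma trace_hermitian (H : Matrix n n ℂ) (hH : H.IsHermitian) :
    H.trace = ((∑ i, hH.eigenvalues i : ℝ) : ℂ) := by
  conv_lhs => rw [spectral_eq H hH]
  rw [Matrix.trace_mul_cycle, unit_star_mul H hH, Matrix.one_mul, Matrix.trace_diagonal]
  push_cast
  rfl

lemma diag_conj_eq_dotProduct (X U : Matrix n n ℂ) (i : n) :
    (star U * X * U) i i = dotProduct (star (fun a => U a i)) (X *ᵥ (fun a => U a i)) := by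
  simp only [Matrix.mul_apply, Matrix.mulVec, dotProduct, Matrix.star_apply,
    Pi.star_apply, Finset.sum_mul, Finset.mul_sum]
  rw [Finset.sum_comm]
  apply Finset.sum_congr rfl; intro a _
  apply Finset.sum_congr rfl; intro b _
  ring

lemma re_diag_conj_nonneg {X : Matrix n n ℂ} (hX : X.PosSemidef) (U : Matrix n n ℂ) (i : n) :
    0 ≤ ((star U * X * U) i i).re := by
  rw [diag_conj_eq_dotProduct]
  exact hX.re_dotProduct_nonneg _

lemma traceNorm_psd {X : Matrix n n ℂ} (hX : X.PosSemidef) :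
    traceNorm X = X.trace.re := by
  rw [traceNorm_hermitian X hX.1, trace_hermitian X hX.1, Complex.ofReal_re]
  exact Finset.sum_congr rfl fun i _ => abs_of_nonneg (hX.eigenvalues_nonneg i)

lemma abs_re_trace_le_traceNorm (H : Matrix n n ℂ) (hH : H.IsHermitian) :
    |H.trace.re| ≤ traceNorm H := by
  rw [traceNorm_hermitian H hH, trace_hermitian H hH, Complex.ofReal_re]
  exact Finset.abs_sum_le_sum_abs _ _

lemma traceNorm_sub_le {X Y : Matrix n n ℂ} (hX : X.PosSemidef) (hY : Y.PosSemidef) :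
    traceNorm (X - Y) ≤ X.trace.re + Y.trace.re := by
  have hH : (X - Y).IsHermitian := hX.1.sub hY.1
  rw [traceNorm_hermitian (X - Y) hH]
  set U : Matrix n n ℂ := (hH.eigenvectorUnitary : Matrix n n ℂ) with hU
  have hdiag : star U * (X - Y) * U = Matrix.diagonal (RCLike.ofReal ∘ hH.eigenvalues) :=
    star_mul_self_mul_eq_diag _ hH
  have hev : ∀ i, (hH.eigenvalues i) = ((star U * X * U) i i).re - ((star U * Y * U) i i).re := by
    intro i
    have : (star U * (X - Y) * U) i i = ((hH.eigenvalues i : ℝ) : ℂ) := by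
      rw [hdiag]; simp
    rw [Matrix.mul_sub, Matrix.sub_mul] at this
    have := congrArg Complex.re this
    simpa [Matrix.sub_apply] using this.symm
  have hb : ∀ i, |hH.eigenvalues i| ≤ ((star U * X * U) i i).re + ((star U * Y * U) i i).re := by
    intro i
    rw [hev i]
    have h1 := re_diag_conj_nonneg hX U i
    have h2 := re_diag_conj_nonneg hY U i
    rw [abs_sub_le_iff]; constructor <;> linarith
  calc ∑ i, |hH.eigenvalues i|
      ≤ ∑ i, (((star U * X * U) i i).re + ((star U * Y * U) i i).re) :=
        Finset.sum_le_sum fun i _ => hb i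
    _ = X.trace.re + Y.trace.re := by
        rw [Finset.sum_add_distrib]
        have hX' : ∑ i, ((star U * X * U) i i).re = X.trace.re := by
          rw [← Complex.re_sum]
          congr 1
          exact trace_conj_unitary (X - Y) X hH
        have hY' : ∑ i, ((star U * Y * U) i i).re = Y.trace.re := by
          rw [← Complex.re_sum]
          congr 1
          exact trace_conj_unitary (X - Y) Y hH
        rw [hX', hY']

end traceNorm

/-! #### tensor power lemmas -/

section tensorPow
variable {IA IB : Type} [Fintype IA] [Fintype IB] [DecidableEq IA] [DecidableEq IB]

omit [DecidableEq IA] [DecidableEq IB] in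
lemma tensorPow_mul (X Y : BMat IA IB) (n : ℕ) :
    tensorPow X n * tensorPow Y n = tensorPow (X * Y) n := by
  ext p q
  rw [Matrix.mul_apply, tensorPow]
  simp only [tensorPow, Matrix.mul_apply]
  rw [Fintype.prod_sum (fun i (s : IA × IB) => X (p.1 i, p.2 i) s * Y s (q.1 i, q.2 i))]
  rw [← (Equiv.arrowProdEquivProdArrow (Fin n) (fun _ => IA) (fun _ => IB)).sum_comp]
  apply Finset.sum_congr rfl; intro g _
  rw [← Finset.prod_mul_distrib]
  rfl

omit [Fintype IA] [Fintype IB] [DecidableEq IA] [DecidableEq IB] in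
lemma tensorPow_conjTranspose (X : BMat IA IB) (n : ℕ) :
    (tensorPow X n)ᴴ = tensorPow Xᴴ n := by
  ext p q
  simp [tensorPow, Matrix.conjTranspose_apply, map_prod]

omit [DecidableEq IA] [DecidableEq IB] in
lemma tensorPow_trace (X : BMat IA IB) (n : ℕ) :
    (tensorPow X n).trace = X.trace ^ n := by
  rw [Matrix.trace]
  simp only [Matrix.diag, tensorPow]
  rw [Matrix.trace, Finset.sum_pow']
  rw [← (Equiv.arrowProdEquivProdArrow (Fin n) (fun _ => IA) (fun _ => IB)).sum_comp]
  rfl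

omit [Fintype IA] [Fintype IB] [DecidableEq IA] [DecidableEq IB] in
lemma tensorPow_isHermitian {X : BMat IA IB} (hX : X.IsHermitian) (n : ℕ) :
    (tensorPow X n).IsHermitian := by
  rw [Matrix.IsHermitian, tensorPow_conjTranspose, hX.eq]

lemma tensorPow_posSemidef {X : BMat IA IB} (hX : X.PosSemidef) (n : ℕ) :
    (tensorPow X n).PosSemidef := by
  have h1 : X = (psdRoot hX)ᴴ * psdRoot hX := by
    rw [psdRoot_isHermitian, psdRoot_mul_self]
  rw [h1, ← tensorPow_mul, ← tensorPow_conjTranspose]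
  exact Matrix.posSemidef_conjTranspose_mul_self _

lemma traceNorm_tensorPow (X : BMat IA IB) (n : ℕ) :
    traceNorm (tensorPow X n) = traceNorm X ^ n := by
  have hpsd := Matrix.posSemidef_conjTranspose_mul_self X
  set S := tnSqrt X with hSdef
  have hSpsd : S.PosSemidef := tnSqrt_psd X
  have hTpsd : (tensorPow S n).PosSemidef := tensorPow_posSemidef hSpsd n
  have hsq : (tensorPow S n) ^ 2 = (tensorPow X n)ᴴ * tensorPow X n := by
    rw [pow_two, tensorPow_mul, tensorPow_conjTranspose, tensorPow_mul]
    congr 1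
    exact tnSqrt_mul X
  have heq := psd_sqrt_unique hTpsd (tnSqrt_psd _) (by rw [← pow_two, hsq]) (tnSqrt_mul _)
  have htr : S.trace = ((S.trace.re : ℝ) : ℂ) := by
    rw [trace_hermitian S hSpsd.1]; simp
  rw [traceNorm_eq, ← heq, tensorPow_trace, htr, ← Complex.ofReal_pow, Complex.ofReal_re]
  rfl

end tensorPow

/-! #### complete positivity machinery -/

section CP
variable {I J : Type} [Fintype I] [Fintype J] [DecidableEq I] [DecidableEq J]

omit [Fintype J] [DecidableEq I] [DecidableEq J] in
lemma kraus_ext_entry {k : ℕ} (Ks : Matrix J I ℂ) (M : Matrix (Fin k × I) (Fin k × I) ℂ)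
    (p q : Fin k × J) :
    (Ks * (Matrix.of fun i i' => M (p.1, i) (q.1, i')) * Ksᴴ) p.2 q.2
      = ((Matrix.of fun (r : Fin k × J) (c : Fin k × I) => if r.1 = c.1 then Ks r.2 c.2 else 0) * M *
         (Matrix.of fun (r : Fin k × J) (c : Fin k × I) => if r.1 = c.1 then Ks r.2 c.2 else 0)ᴴ) p q := by
  simp only [Matrix.mul_apply, Matrix.conjTranspose_apply, Matrix.of_apply,
    Fintype.sum_prod_type, apply_ite (star : ℂ → ℂ), star_zero, ite_mul, mul_ite, zero_mul, mul_zero,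
    Finset.sum_mul, Finset.mul_sum]
  rw [Finset.sum_comm]
  conv_rhs => rw [Finset.sum_comm]
  simp only [Finset.sum_ite_eq, Finset.mem_univ, if_true, Finset.sum_ite_irrel,
    Finset.sum_const_zero]
  rw [Finset.sum_comm]

lemma posSemidef_sum {S : Type} [Fintype S] {m : Type} [Fintype m]
    (F : S → Matrix m m ℂ) (h : ∀ s, (F s).PosSemidef) : (∑ s, F s).PosSemidef := by
  classical
  exact Finset.sum_induction F Matrix.PosSemidef (fun a b ha hb => ha.add hb)
    Matrix.PosSemidef.zero (fun s _ => h s)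

lemma completelyPositive_kraus {S : Type} [Fintype S] (K : S → Matrix J I ℂ) :
    CompletelyPositive (fun X : Matrix I I ℂ => ∑ s, K s * X * (K s)ᴴ) := by
  intro k M hM
  have hrw : extMap (fun X => ∑ s, K s * X * (K s)ᴴ) k M =
      ∑ s, (Matrix.of fun (r : Fin k × J) (c : Fin k × I) => if r.1 = c.1 then K s r.2 c.2 else 0) * M *
        (Matrix.of fun (r : Fin k × J) (c : Fin k × I) => if r.1 = c.1 then K s r.2 c.2 else 0)ᴴ := by
    ext p q
    simp only [extMap, Matrix.sum_apply]
    exact Finset.sum_congr rfl fun s _ => kraus_ext_entry (K s) M p q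
  rw [hrw]
  exact posSemidef_sum _ fun s => hM.mul_mul_conjTranspose_same _

omit [DecidableEq I] [DecidableEq J] in
lemma CompletelyPositive.posSemidef_map {f : Matrix I I ℂ → Matrix J J ℂ}
    (hf : CompletelyPositive f) {X : Matrix I I ℂ} (hX : X.PosSemidef) :
    (f X).PosSemidef := by
  have h1 : (X.submatrix (Prod.snd : Fin 1 × I → I) Prod.snd).PosSemidef := hX.submatrix _
  have h2 := hf 1 _ h1
  have h3 : f X = (extMap f 1 (X.submatrix (Prod.snd : Fin 1 × I → I) Prod.snd)).submatrix
      (fun j : J => ((0 : Fin 1), j)) (fun j => ((0 : Fin 1), j)) := rfl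
  rw [h3]
  exact h2.submatrix _

end CP

/-! #### the measure-and-prepare map -/

section measPrep
variable {m1 m2 : Type} [Fintype m1] [Fintype m2] [DecidableEq m1] [DecidableEq m2]

omit [DecidableEq m1] [DecidableEq m2] in
lemma measprep_entry (u : m1 → ℂ) (R : Matrix m2 m2 ℂ) (X : Matrix m1 m1 ℂ) (j j' : m2) :
    ∑ c : m2, ((Matrix.of fun (jj : m2) (p : m1) => R jj c * star (u p)) * X *
        (Matrix.of fun (jj : m2) (p : m1) => R jj c * star (u p))ᴴ) j j'
      = (dotProduct (star u) (X *ᵥ u)) * (R * Rᴴ) j j' := by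
  simp only [Matrix.mul_apply, Matrix.conjTranspose_apply, Matrix.of_apply, Matrix.mulVec,
    dotProduct, Pi.star_apply, star_mul', star_star, Finset.sum_mul, Finset.mul_sum]
  rw [Finset.sum_comm]
  rw [Finset.sum_comm]
  apply Finset.sum_congr rfl; intro x _
  rw [Finset.sum_comm]
  apply Finset.sum_congr rfl; intro i _
  apply Finset.sum_congr rfl; intro y _
  ring

noncomputable def measPrep {A : Matrix m1 m1 ℂ} (hA : A.IsHermitian) (C D : Matrix m2 m2 ℂ) :
    Matrix m1 m1 ℂ →ₗ[ℂ] Matrix m2 m2 ℂ where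
  toFun X := ∑ i, ((star (hA.eigenvectorUnitary : Matrix m1 m1 ℂ) * X *
      (hA.eigenvectorUnitary : Matrix m1 m1 ℂ)) i i) • (if 0 ≤ hA.eigenvalues i then C else D)
  map_add' X Y := by
    simp only [Matrix.mul_add, Matrix.add_mul, Matrix.add_apply, add_smul,
      Finset.sum_add_distrib]
  map_smul' c X := by
    simp only [Matrix.mul_smul, Matrix.smul_mul, Matrix.smul_apply, smul_eq_mul,
      RingHom.id_apply, Finset.smul_sum, smul_smul]

lemma measPrep_trace {A : Matrix m1 m1 ℂ} (hA : A.IsHermitian) {C D : Matrix m2 m2 ℂ}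
    (hC : C.trace = 1) (hD : D.trace = 1) (X : Matrix m1 m1 ℂ) :
    (measPrep hA C D X).trace = X.trace := by
  simp only [measPrep, LinearMap.coe_mk, AddHom.coe_mk]
  rw [Matrix.trace_sum]
  simp only [Matrix.trace_smul, apply_ite Matrix.trace, hC, hD, ite_self, smul_eq_mul, mul_one]
  have : ∑ i, (star (hA.eigenvectorUnitary : Matrix m1 m1 ℂ) * X *
      (hA.eigenvectorUnitary : Matrix m1 m1 ℂ)) i i
      = (star (hA.eigenvectorUnitary : Matrix m1 m1 ℂ) * X *
      (hA.eigenvectorUnitary : Matrix m1 m1 ℂ)).trace := rfl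
  rw [this, Matrix.trace_mul_cycle, (Matrix.mem_unitaryGroup_iff).mp hA.eigenvectorUnitary.2,
    Matrix.one_mul]

lemma measPrep_isHermitian {A : Matrix m1 m1 ℂ} (hA : A.IsHermitian) {C D : Matrix m2 m2 ℂ}
    (hC : C.IsHermitian) (hD : D.IsHermitian) {X : Matrix m1 m1 ℂ} (hX : X.IsHermitian) :
    (measPrep hA C D X).IsHermitian := by
  set U : Matrix m1 m1 ℂ := (hA.eigenvectorUnitary : Matrix m1 m1 ℂ)
  have hconj : (star U * X * U).IsHermitian := by
    rw [Matrix.star_eq_conjTranspose]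
    exact Matrix.isHermitian_conjTranspose_mul_mul U hX
  rw [Matrix.IsHermitian, measPrep]
  simp only [LinearMap.coe_mk, AddHom.coe_mk, Matrix.conjTranspose_sum,
    Matrix.conjTranspose_smul]
  apply Finset.sum_congr rfl; intro i _
  rw [apply_ite Matrix.conjTranspose, hC.eq, hD.eq]
  congr 1
  calc star ((star U * X * U) i i) = ((star U * X * U)ᴴ) i i := by
        rw [Matrix.conjTranspose_apply]
    _ = (star U * X * U) i i := by rw [hconj.eq]

lemma measPrep_apply_self {A : Matrix m1 m1 ℂ} (hA : A.IsHermitian) (C D : Matrix m2 m2 ℂ) :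
    measPrep hA C D A
      = (((∑ i, if 0 ≤ hA.eigenvalues i then hA.eigenvalues i else 0 : ℝ)) : ℂ) • C
        + (((∑ i, if 0 ≤ hA.eigenvalues i then 0 else hA.eigenvalues i : ℝ)) : ℂ) • D := by
  simp only [measPrep, LinearMap.coe_mk, AddHom.coe_mk]
  rw [star_mul_self_mul_eq_diag _ hA]
  simp only [Matrix.diagonal_apply_eq, Function.comp_apply]
  have key : ∀ x : m1, (RCLike.ofReal (hA.eigenvalues x) : ℂ) • (if 0 ≤ hA.eigenvalues x then C else D)
      = ((if 0 ≤ hA.eigenvalues x then hA.eigenvalues x else 0 : ℝ) : ℂ) • C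
        + ((if 0 ≤ hA.eigenvalues x then 0 else hA.eigenvalues x : ℝ) : ℂ) • D := by
    intro x; split_ifs with h <;> simp [RCLike.ofReal_alg]
  rw [Finset.sum_congr rfl fun x _ => key x, Finset.sum_add_distrib,
    ← Finset.sum_smul, ← Finset.sum_smul]
  push_cast
  rfl

lemma measPrep_completelyPositive {A : Matrix m1 m1 ℂ} (hA : A.IsHermitian) {C D : Matrix m2 m2 ℂ}
    (hC : C.PosSemidef) (hD : D.PosSemidef) :
    CompletelyPositive (fun X => measPrep hA C D X) := by
  set U : Matrix m1 m1 ℂ := (hA.eigenvectorUnitary : Matrix m1 m1 ℂ) with hU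
  have hite : ∀ i, (if 0 ≤ hA.eigenvalues i then C else D).PosSemidef := by
    intro i; split_ifs; exacts [hC, hD]
  have key : (fun X => measPrep hA C D X) =
      fun X => ∑ s : m1 × m2, (Matrix.of fun (j : m2) (p : m1) =>
        psdRoot (hite s.1) j s.2 * star (U p s.1)) * X *
        (Matrix.of fun (j : m2) (p : m1) => psdRoot (hite s.1) j s.2 * star (U p s.1))ᴴ := by
    funext X
    rw [Fintype.sum_prod_type]
    ext j j'
    simp only [Matrix.sum_apply, measPrep, LinearMap.coe_mk, AddHom.coe_mk, Matrix.smul_apply,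
      smul_eq_mul]
    apply Finset.sum_congr rfl; intro i _
    rw [measprep_entry (fun p => U p i) (psdRoot (hite i)) X j j']
    rw [← diag_conj_eq_dotProduct]
    congr 1
    rw [psdRoot_isHermitian, psdRoot_mul_self]
  rw [key]
  exact completelyPositive_kraus _

end measPrep

/-! #### one-shot conversion lemmas -/

section oneShot
variable {IA IB JA JB : Type} [Fintype IA] [Fintype IB] [Fintype JA] [Fintype JB]
  [DecidableEq IA] [DecidableEq IB] [DecidableEq JA] [DecidableEq JB]

lemma posSemidef_smul_real {m : Type} [Fintype m] {c : ℝ} (hc : 0 ≤ c)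
    {M : Matrix m m ℂ} (hM : M.PosSemidef) : ((c : ℂ) • M).PosSemidef := by
  constructor
  · rw [Matrix.IsHermitian, Matrix.conjTranspose_smul, hM.1.eq, Complex.star_def,
      Complex.conj_ofReal]
  · exact (hM.smul (a := (c : ℂ)) (Complex.zero_le_real.mpr hc)).2

lemma conj_diag_psd {m : Type} [Fintype m] [DecidableEq m] (U : Matrix m m ℂ) (d : m → ℝ)
    (hd : ∀ i, 0 ≤ d i) :
    (U * Matrix.diagonal (fun i => ((d i : ℝ) : ℂ)) * star U).PosSemidef := by
  have hdiag : Matrix.PosSemidef (Matrix.diagonal (fun i => ((d i : ℝ) : ℂ))) := by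
    apply Matrix.PosSemidef.diagonal
    intro i
    simp only [Pi.zero_apply]
    rw [Complex.zero_le_real]
    exact hd i
  simpa [Matrix.star_eq_conjTranspose] using hdiag.mul_mul_conjTranspose_same U

lemma trace_conj_diag {m : Type} [Fintype m] [DecidableEq m] {H : Matrix m m ℂ}
    (hH : H.IsHermitian) (d : m → ℝ) :
    ((hH.eigenvectorUnitary : Matrix m m ℂ) * Matrix.diagonal (fun i => ((d i : ℝ) : ℂ)) *
      star (hH.eigenvectorUnitary : Matrix m m ℂ)).trace = ((∑ i, d i : ℝ) : ℂ) := by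
  rw [Matrix.trace_mul_cycle, unit_star_mul H hH, Matrix.one_mul, Matrix.trace_diagonal]
  push_cast
  rfl

/-- Monotonicity: a PPTq operation cannot increase the trace norm of the partial transpose. -/
lemma traceNorm_ptB_map_le {Λ : BMat IA IB →ₗ[ℂ] BMat JA JB} (hΛ : IsPPTq Λ)
    {X : BMat IA IB} (hX : X.IsHermitian) :
    traceNorm (ptB (Λ X)) ≤ traceNorm (ptB X) := by
  set A := ptB X with hAdef
  have hA : A.IsHermitian := ptB_isHermitian hX
  set U : Matrix (IA × IB) (IA × IB) ℂ := (hA.eigenvectorUnitary : Matrix (IA × IB) (IA × IB) ℂ) with hUdef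
  set P := U * Matrix.diagonal (fun i => ((max (hA.eigenvalues i) 0 : ℝ) : ℂ)) * star U with hPdef
  set Q := U * Matrix.diagonal (fun i => ((max (-hA.eigenvalues i) 0 : ℝ) : ℂ)) * star U with hQdef
  have hP : P.PosSemidef := conj_diag_psd U _ (fun i => le_max_right _ _)
  have hQ : Q.PosSemidef := conj_diag_psd U _ (fun i => le_max_right _ _)
  have hdiag : Matrix.diagonal (RCLike.ofReal ∘ hA.eigenvalues : (IA × IB) → ℂ)
      = Matrix.diagonal (fun i => ((max (hA.eigenvalues i) 0 : ℝ) : ℂ))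
        - Matrix.diagonal (fun i => ((max (-hA.eigenvalues i) 0 : ℝ) : ℂ)) := by
    ext i j
    rcases eq_or_ne i j with hij | hij
    · subst hij
      simp only [Matrix.sub_apply, Matrix.diagonal_apply_eq, Function.comp_apply]
      rcases le_total 0 (hA.eigenvalues i) with h | h
      · rw [max_eq_left h, max_eq_right (neg_nonpos.mpr h)]; simp
      · rw [max_eq_right h, max_eq_left (neg_nonneg.mpr h)]; simp
    · simp [Matrix.diagonal_apply_ne _ hij]
  have hPQ : A = P - Q := by
    conv_lhs => rw [spectral_eq A hA, hdiag]
    rw [Matrix.mul_sub, Matrix.sub_mul, hPdef, hQdef]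
  have htrP : P.trace = ((∑ i, max (hA.eigenvalues i) 0 : ℝ) : ℂ) := trace_conj_diag hA _
  have htrQ : Q.trace = ((∑ i, max (-hA.eigenvalues i) 0 : ℝ) : ℂ) := trace_conj_diag hA _
  set g := fun Y : BMat IA IB => ptB (Λ (ptB Y)) with hg
  have hgCP : CompletelyPositive g := hΛ.2.2
  have hgP := CompletelyPositive.posSemidef_map hgCP hP
  have hgQ := CompletelyPositive.posSemidef_map hgCP hQ
  have hsub : g (P - Q) = g P - g Q := by
    show ptB (Λ (ptB (P - Q))) = _
    rw [show ptB (P - Q) = ptB P - ptB Q from rfl, map_sub]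
    rfl
  have himg : ptB (Λ X) = g P - g Q := by
    rw [← hsub, ← hPQ]
    rfl
  have htgP : (g P).trace = P.trace := by
    show (ptB (Λ (ptB P))).trace = _
    rw [ptB_trace, hΛ.2.1, ptB_trace]
  have htgQ : (g Q).trace = Q.trace := by
    show (ptB (Λ (ptB Q))).trace = _
    rw [ptB_trace, hΛ.2.1, ptB_trace]
  have h1 : traceNorm (ptB (Λ X)) ≤ (g P).trace.re + (g Q).trace.re := by
    rw [himg]
    exact traceNorm_sub_le hgP hgQ
  rw [htgP, htgQ, htrP, htrQ, Complex.ofReal_re, Complex.ofReal_re] at h1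
  refine h1.trans_eq ?_
  rw [traceNorm_hermitian A hA, ← Finset.sum_add_distrib]
  apply Finset.sum_congr rfl; intro i _
  rcases le_total 0 (hA.eigenvalues i) with h | h
  · rw [max_eq_left h, max_eq_right (neg_nonpos.mpr h), add_zero, abs_of_nonneg h]
  · rw [max_eq_right h, max_eq_left (neg_nonneg.mpr h), zero_add, abs_of_nonpos h]

end oneShot

section achieve
variable {IA IB JA JB : Type} [Fintype IA] [Fintype IB] [Fintype JA] [Fintype JB]
  [DecidableEq IA] [DecidableEq IB] [DecidableEq JA] [DecidableEq JB]

/-- Build a PPTq operation sending `ρ` to `σ` from suitable states `C`, `D`. -/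
lemma build_PPTq {ρ : BMat IA IB} {σ : BMat JA JB} (hA : (ptB ρ).IsHermitian)
    (C D : BMat JA JB) (hC : C.PosSemidef) (hD : D.PosSemidef)
    (htC : C.trace = 1) (htD : D.trace = 1)
    (hCD : (((∑ i, if 0 ≤ hA.eigenvalues i then hA.eigenvalues i else 0 : ℝ)) : ℂ) • C
        + (((∑ i, if 0 ≤ hA.eigenvalues i then 0 else hA.eigenvalues i : ℝ)) : ℂ) • D = ptB σ) :
    ∃ Λ : BMat IA IB →ₗ[ℂ] BMat JA JB, IsPPTq Λ ∧ Λ ρ = σ := by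
  refine ⟨ptBL.comp ((measPrep hA C D).comp ptBL), ⟨?_, ?_, ?_⟩, ?_⟩
  · intro X hX
    show (ptB (measPrep hA C D (ptB X))).IsHermitian
    exact ptB_isHermitian (measPrep_isHermitian hA hC.1 hD.1 (ptB_isHermitian hX))
  · intro X
    show (ptB (measPrep hA C D (ptB X))).trace = X.trace
    rw [ptB_trace, measPrep_trace hA htC htD, ptB_trace]
  · have hfun : (fun X : BMat IA IB => ptB ((ptBL.comp ((measPrep hA C D).comp ptBL)) (ptB X)))
        = fun X => measPrep hA C D X := rfl
    rw [hfun]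
    exact measPrep_completelyPositive hA hC hD
  · show ptB (measPrep hA C D (ptB ρ)) = σ
    rw [measPrep_apply_self hA C D, hCD]
    rfl

/-- One-shot achievability under PPTq operations. -/
lemma exists_PPTq_of_le {ρ : BMat IA IB} {σ : BMat JA JB}
    (hρH : ρ.IsHermitian) (hσH : σ.IsHermitian)
    (hρt : ρ.trace = 1) (hσt : σ.trace = 1)
    (hle : traceNorm (ptB σ) ≤ traceNorm (ptB ρ)) :
    ∃ Λ : BMat IA IB →ₗ[ℂ] BMat JA JB, IsPPTq Λ ∧ Λ ρ = σ := by
  have hA : (ptB ρ).IsHermitian := ptB_isHermitian hρH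
  have hB : (ptB σ).IsHermitian := ptB_isHermitian hσH
  set lam := hA.eigenvalues with hlam
  set mu := hB.eigenvalues with hmu
  set aP : ℝ := ∑ i, if 0 ≤ lam i then lam i else 0 with haP
  set aN : ℝ := ∑ i, if 0 ≤ lam i then 0 else (- lam i) with haN
  set bP : ℝ := ∑ j, if 0 ≤ mu j then mu j else 0 with hbP
  set bN : ℝ := ∑ j, if 0 ≤ mu j then 0 else (- mu j) with hbN
  have haN0 : 0 ≤ aN := Finset.sum_nonneg fun i _ => by
    split_ifs with h; · exact le_refl 0
    · linarith [lt_of_not_ge h]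
  have hbN0 : 0 ≤ bN := Finset.sum_nonneg fun j _ => by
    split_ifs with h; · exact le_refl 0
    · linarith [lt_of_not_ge h]
  -- trace identities
  have htrA : ((∑ i, lam i : ℝ) : ℂ) = 1 := by
    rw [← trace_hermitian _ hA, ptB_trace, hρt]
  have htrB : ((∑ j, mu j : ℝ) : ℂ) = 1 := by
    rw [← trace_hermitian _ hB, ptB_trace, hσt]
  have hsumA : aP - aN = 1 := by
    have h1 : (∑ i, lam i : ℝ) = 1 := by exact_mod_cast htrA
    rw [haP, haN, ← Finset.sum_sub_distrib, ← h1]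
    apply Finset.sum_congr rfl; intro i _
    split_ifs <;> ring
  have hsumB : bP - bN = 1 := by
    have h1 : (∑ j, mu j : ℝ) = 1 := by exact_mod_cast htrB
    rw [hbP, hbN, ← Finset.sum_sub_distrib, ← h1]
    apply Finset.sum_congr rfl; intro j _
    split_ifs <;> ring
  have habsA : aP + aN = traceNorm (ptB ρ) := by
    rw [traceNorm_hermitian _ hA, haP, haN, ← Finset.sum_add_distrib]
    apply Finset.sum_congr rfl; intro i _
    rcases le_or_gt 0 (lam i) with h | h
    · rw [if_pos h, if_pos h, abs_of_nonneg h, add_zero]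
    · rw [if_neg (not_le.mpr h), if_neg (not_le.mpr h), abs_of_neg h, zero_add]
  have habsB : bP + bN = traceNorm (ptB σ) := by
    rw [traceNorm_hermitian _ hB, hbP, hbN, ← Finset.sum_add_distrib]
    apply Finset.sum_congr rfl; intro j _
    rcases le_or_gt 0 (mu j) with h | h
    · rw [if_pos h, if_pos h, abs_of_nonneg h, add_zero]
    · rw [if_neg (not_le.mpr h), if_neg (not_le.mpr h), abs_of_neg h, zero_add]
  have hbNaN : bN ≤ aN := by
    have := hle
    rw [← habsA, ← habsB] at this
    linarith
  have haPpos : aP = 1 + aN := by linarith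
  -- eigen-decomposition pieces of B
  set W : Matrix (JA × JB) (JA × JB) ℂ := (hB.eigenvectorUnitary : Matrix (JA × JB) (JA × JB) ℂ) with hW
  set Bpos := W * Matrix.diagonal (fun j => ((max (mu j) 0 : ℝ) : ℂ)) * star W with hBposdef
  set Bneg := W * Matrix.diagonal (fun j => ((max (-(mu j)) 0 : ℝ) : ℂ)) * star W with hBnegdef
  have hBpos : Bpos.PosSemidef := conj_diag_psd W _ (fun j => le_max_right _ _)
  have hBneg : Bneg.PosSemidef := conj_diag_psd W _ (fun j => le_max_right _ _)
  have hBsub : ptB σ = Bpos - Bneg := by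
    conv_lhs => rw [spectral_eq _ hB]
    have hdiag : Matrix.diagonal (RCLike.ofReal ∘ mu : (JA × JB) → ℂ)
        = Matrix.diagonal (fun j => ((max (mu j) 0 : ℝ) : ℂ))
          - Matrix.diagonal (fun j => ((max (-(mu j)) 0 : ℝ) : ℂ)) := by
      ext i j
      rcases eq_or_ne i j with hij | hij
      · subst hij
        simp only [Matrix.sub_apply, Matrix.diagonal_apply_eq, Function.comp_apply]
        rcases le_total 0 (mu i) with h | h
        · rw [max_eq_left h, max_eq_right (neg_nonpos.mpr h)]; simp
        · rw [max_eq_right h, max_eq_left (neg_nonneg.mpr h)]; simp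
      · simp [Matrix.diagonal_apply_ne _ hij]
    rw [hdiag, Matrix.mul_sub, Matrix.sub_mul]
  have htrBpos : Bpos.trace = ((∑ j, max (mu j) 0 : ℝ) : ℂ) := trace_conj_diag hB _
  have htrBneg : Bneg.trace = ((∑ j, max (-(mu j)) 0 : ℝ) : ℂ) := trace_conj_diag hB _
  have hbP_eq : (∑ j, max (mu j) 0 : ℝ) = bP := by
    rw [hbP]; apply Finset.sum_congr rfl; intro j _
    rcases le_or_gt 0 (mu j) with h | h
    · rw [max_eq_left h, if_pos h]
    · rw [max_eq_right h.le, if_neg (not_le.mpr h)]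
  have hbN_eq : (∑ j, max (-(mu j)) 0 : ℝ) = bN := by
    rw [hbN]; apply Finset.sum_congr rfl; intro j _
    rcases le_or_gt 0 (mu j) with h | h
    · rw [max_eq_right (neg_nonpos.mpr h), if_pos h]
    · rw [max_eq_left (neg_nonneg.mpr h.le), if_neg (not_le.mpr h)]
  by_cases hbn : bN = 0
  · -- `ptB σ` is PSD
    have hBneg0 : Bneg = 0 := by
      have hz : ∀ j : JA × JB, max (-(mu j)) 0 = 0 := by
        intro j
        have := (Finset.sum_eq_zero_iff_of_nonneg
          (fun j _ => le_max_right (-(mu j)) 0)).mp (hbN_eq.trans hbn) j (Finset.mem_univ j)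
        exact this
      have : Matrix.diagonal (fun j => ((max (-(mu j)) 0 : ℝ) : ℂ)) = 0 := by
        ext i j
        rcases eq_or_ne i j with hij | hij
        · subst hij; simp [hz i]
        · simp [Matrix.diagonal_apply_ne _ hij]
      rw [hBnegdef, this, Matrix.mul_zero, Matrix.zero_mul]
    have hBpsd : (ptB σ).PosSemidef := by
      rw [hBsub, hBneg0, sub_zero]; exact hBpos
    refine build_PPTq hA (ptB σ) (ptB σ) hBpsd hBpsd (by rw [ptB_trace, hσt]) (by rw [ptB_trace, hσt]) ?_
    rw [← add_smul, ← Complex.ofReal_add]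
    have : (aP + (∑ i, if 0 ≤ lam i then 0 else lam i) : ℝ) = 1 := by
      have : (∑ i, if 0 ≤ lam i then 0 else lam i : ℝ) = -aN := by
        rw [haN, ← Finset.sum_neg_distrib]
        apply Finset.sum_congr rfl; intro i _
        split_ifs <;> ring
      rw [this]; linarith
    rw [show (∑ i, if 0 ≤ lam i then lam i else 0 : ℝ) = aP from rfl, this]
    simp
  · have hbnpos : 0 < bN := lt_of_le_of_ne hbN0 (Ne.symm hbn)
    have haNpos : 0 < aN := lt_of_lt_of_le hbnpos hbNaN
    have haPpos' : 0 < aP := by linarith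
    set D := ((bN⁻¹ : ℝ) : ℂ) • Bneg with hDdef
    set C := ((aP⁻¹ : ℝ) : ℂ) • (Bpos + (((aN / bN - 1 : ℝ)) : ℂ) • Bneg) with hCdef
    have hDpsd : D.PosSemidef := posSemidef_smul_real (inv_nonneg.mpr hbN0) hBneg
    have hCpsd : C.PosSemidef := by
      apply posSemidef_smul_real (inv_nonneg.mpr haPpos'.le)
      refine hBpos.add (posSemidef_smul_real ?_ hBneg)
      rw [sub_nonneg, le_div_iff₀ hbnpos, one_mul]
      exact hbNaN
    have htD : D.trace = 1 := by
      rw [hDdef, Matrix.trace_smul, htrBneg, hbN_eq, smul_eq_mul, ← Complex.ofReal_mul,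
        inv_mul_cancel₀ hbn]
      norm_num
    have htC : C.trace = 1 := by
      rw [hCdef, Matrix.trace_smul, Matrix.trace_add, Matrix.trace_smul, htrBpos, htrBneg,
        hbP_eq, hbN_eq, smul_eq_mul, smul_eq_mul, ← Complex.ofReal_mul, ← Complex.ofReal_add,
        ← Complex.ofReal_mul]
      have : (aP⁻¹ * (bP + (aN / bN - 1) * bN) : ℝ) = 1 := by
        field_simp
        linarith
      rw [this]
      norm_num
    refine build_PPTq hA C D hCpsd hDpsd htC htD ?_
    have hsP : (∑ i, if 0 ≤ lam i then lam i else 0 : ℝ) = aP := rfl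
    have hsN : (∑ i, if 0 ≤ lam i then 0 else lam i : ℝ) = -aN := by
      rw [haN, ← Finset.sum_neg_distrib]
      apply Finset.sum_congr rfl; intro i _
      split_ifs <;> ring
    have haPne : ((aP : ℝ) : ℂ) ≠ 0 := Complex.ofReal_ne_zero.mpr (ne_of_gt haPpos')
    have hbNne : ((bN : ℝ) : ℂ) ≠ 0 := Complex.ofReal_ne_zero.mpr hbn
    rw [hsP, hsN, hCdef, hDdef, hBsub]
    ext i j
    simp only [Matrix.smul_apply, Matrix.add_apply, Matrix.sub_apply, smul_eq_mul]
    push_cast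
    field_simp
    ring
end achieve

end PPTAux

open PPTAux in
/-- The asymptotic exact conversion rate under PPTq operations is
the ratio of logarithmic negativities. -/
theorem convRate_eq_EN_div {dA dB dA' dB' : ℕ}
    (ρ : BMat (Fin dA) (Fin dB)) (σ : BMat (Fin dA') (Fin dB'))
    (hρ : IsState ρ) (hσ : IsState σ) (hσEN : 0 < EN σ) :
    convRate ρ σ = EN ρ / EN σ := by
  have hρH : ρ.IsHermitian := hρ.1.1
  have hσH : σ.IsHermitian := hσ.1.1
  have hρt : ρ.trace = 1 := hρ.2
  have hσt : σ.trace = 1 := hσ.2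
  set Nρ : ℝ := traceNorm (ptB ρ) with hNρ
  set Nσ : ℝ := traceNorm (ptB σ) with hNσ
  set Eρ : ℝ := EN ρ with hEρ
  set Eσ : ℝ := EN σ with hEσ
  have hEρ_def : Eρ = Real.logb 2 Nρ := rfl
  have hEσ_def : Eσ = Real.logb 2 Nσ := rfl
  have hNρ1 : 1 ≤ Nρ := by
    have h := abs_re_trace_le_traceNorm (ptB ρ) (ptB_isHermitian hρH)
    rw [ptB_trace, hρt] at h
    simpa using h
  have hNσ1 : 1 ≤ Nσ := by
    have h := abs_re_trace_le_traceNorm (ptB σ) (ptB_isHermitian hσH)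
    rw [ptB_trace, hσt] at h
    simpa using h
  have hNρ0 : 0 < Nρ := lt_of_lt_of_le one_pos hNρ1
  have hNσ0 : 0 < Nσ := lt_of_lt_of_le one_pos hNσ1
  have hEσpos : 0 < Eσ := hσEN
  have hEρ0 : 0 ≤ Eρ := Real.logb_nonneg one_lt_two hNρ1
  have pow_eq : ∀ (N : ℝ), 0 < N → ∀ (k : ℕ), N ^ k = (2 : ℝ) ^ ((k : ℝ) * Real.logb 2 N) := by
    intro N hN k
    rw [mul_comm, Real.rpow_mul (by norm_num : (0:ℝ) ≤ 2),
      Real.rpow_logb two_pos (by norm_num) hN, Real.rpow_natCast]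
  -- one-shot existence for n copies to m copies
  have hexists : ∀ n m : ℕ, (m : ℝ) * Eσ ≤ (n : ℝ) * Eρ →
      ∃ Λ : BMat (Fin n → Fin dA) (Fin n → Fin dB) →ₗ[ℂ]
            BMat (Fin m → Fin dA') (Fin m → Fin dB'),
        IsPPTq Λ ∧ Λ (tensorPow ρ n) = tensorPow σ m := by
    intro n m hcond
    apply exists_PPTq_of_le (tensorPow_isHermitian hρH n) (tensorPow_isHermitian hσH m)
      (by rw [tensorPow_trace, hρt, one_pow]) (by rw [tensorPow_trace, hσt, one_pow])
    rw [ptB_tensorPow, ptB_tensorPow, traceNorm_tensorPow, traceNorm_tensorPow,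
      ← hNρ, ← hNσ, pow_eq Nσ hNσ0 m, pow_eq Nρ hNρ0 n,
      Real.rpow_le_rpow_left_iff one_lt_two]
    rw [hEρ_def, hEσ_def] at hcond
    exact hcond
  -- monotonicity
  have hmono : ∀ n m : ℕ,
      (∃ Λ : BMat (Fin n → Fin dA) (Fin n → Fin dB) →ₗ[ℂ]
            BMat (Fin m → Fin dA') (Fin m → Fin dB'),
        IsPPTq Λ ∧ Λ (tensorPow ρ n) = tensorPow σ m) →
      (m : ℝ) * Eσ ≤ (n : ℝ) * Eρ := by
    rintro n m ⟨Λ, hΛ, heq⟩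
    have h := traceNorm_ptB_map_le hΛ (tensorPow_isHermitian hρH n)
    rw [heq, ptB_tensorPow, ptB_tensorPow, traceNorm_tensorPow, traceNorm_tensorPow,
      ← hNρ, ← hNσ, pow_eq Nσ hNσ0 m, pow_eq Nρ hNρ0 n,
      Real.rpow_le_rpow_left_iff one_lt_two] at h
    rw [hEρ_def, hEσ_def]
    exact h
  set r0 : ℝ := Eρ / Eσ with hr0
  set S : Set ℝ := { r : ℝ | 0 ≤ r ∧ ∀ᶠ n : ℕ in Filter.atTop,
    ∃ Λ : BMat (Fin n → Fin dA) (Fin n → Fin dB) →ₗ[ℂ]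
          BMat (Fin ⌊r * n⌋₊ → Fin dA') (Fin ⌊r * n⌋₊ → Fin dB'),
      IsPPTq Λ ∧ Λ (tensorPow ρ n) = tensorPow σ ⌊r * n⌋₊ } with hS
  have hmem : r0 ∈ S := by
    constructor
    · exact div_nonneg hEρ0 hEσpos.le
    · apply Filter.Eventually.of_forall
      intro n
      apply hexists
      have hfl : (⌊r0 * n⌋₊ : ℝ) ≤ r0 * n := Nat.floor_le (by positivity)
      have hr0E : r0 * Eσ = Eρ := div_mul_cancel₀ Eρ (ne_of_gt hEσpos)
      calc (⌊r0 * n⌋₊ : ℝ) * Eσ ≤ (r0 * n) * Eσ :=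
            mul_le_mul_of_nonneg_right hfl hEσpos.le
        _ = (n : ℝ) * (r0 * Eσ) := by ring
        _ = (n : ℝ) * Eρ := by rw [hr0E]
  have hub : ∀ r ∈ S, r ≤ r0 := by
    rintro r ⟨hr0nn, hev⟩
    by_contra hcon
    push_neg at hcon
    have hδ : 0 < r * Eσ - Eρ := by
      have h1 : r0 * Eσ < r * Eσ := mul_lt_mul_of_pos_right hcon hEσpos
      have h2 : r0 * Eσ = Eρ := div_mul_cancel₀ Eρ (ne_of_gt hEσpos)
      linarith
    have hev2 : ∀ᶠ n : ℕ in Filter.atTop, Eσ < (n : ℝ) * (r * Eσ - Eρ) := by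
      have ht : Filter.Tendsto (fun n : ℕ => (n : ℝ) * (r * Eσ - Eρ))
          Filter.atTop Filter.atTop :=
        Filter.Tendsto.atTop_mul_const hδ tendsto_natCast_atTop_atTop
      exact ht.eventually_gt_atTop Eσ
    obtain ⟨n, hΛn, hn2⟩ := (hev.and hev2).exists
    have hle := hmono n ⌊r * n⌋₊ hΛn
    have hfl : r * n - 1 < (⌊r * n⌋₊ : ℝ) := by
      have := Nat.lt_floor_add_one (r * (n : ℝ))
      linarith
    have h1 : (r * n - 1) * Eσ < (⌊r * n⌋₊ : ℝ) * Eσ := mul_lt_mul_of_pos_right hfl hEσpos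
    have h2 : (r * n - 1) * Eσ = (n : ℝ) * (r * Eσ) - Eσ := by ring
    have h3 : (n : ℝ) * (r * Eσ - Eρ) = (n : ℝ) * (r * Eσ) - (n : ℝ) * Eρ := by ring
    linarith
  have : convRate ρ σ = sSup S := rfl
  rw [this, le_antisymm (csSup_le ⟨r0, hmem⟩ hub) (le_csSup ⟨r0, fun x hx => hub x hx⟩ hmem)]

end
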